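/- arXiv:0910.4016 — 2 statements merged into one kernel-verified Lean document; each statement's English description precedes it below -/
import Mathlib

section
/- Let f : M → M be a map and let (U_n)_{n≥1} be a concatenated collection of subsets of M. Fix x ∈ M and N ∈ ℕ, and suppose that sup{ u(y) : y ∈ ⋃_{n≥1} U_n and x ∈ C(y) } ≤ N. Then for every n ≥ 1, every z ∈ f^{−n}(x) belongs to U_n ∪ U_{n+1} ∪ … ∪ U_{n+N}. -/
open Set Function

/-- For `x` in `⋃_{n ≥ 1} U_n`, `u x` is the least `n ≥ 1` with `x ∈ U n`
(and `u x = 0` if there is no such `n`). -/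
noncomputable def chainIndex {M : Type*} (U : ℕ → Set M) (x : M) : ℕ :=
  sInf {n : ℕ | 1 ≤ n ∧ x ∈ U n}

/-- Lemma 2: if every chain containing `x` has length at most `N`, then every `n`-th
preimage of `x` lies in `U_n ∪ U_{n+1} ∪ ⋯ ∪ U_{n+N}`. Here `x ∈ C(y)` is expressed as
`∃ j < u(y), f^[j] y = x`, and every point of the backward orbit of `x` is assumed to lie
in `⋃_{n ≥ 1} U_n`. -/
theorem preimages_in_union_of_bounded_chains {M : Type*} (f : M → M)
    (U : ℕ → Set M)
    (hconc : ∀ n m, 1 ≤ n → 1 ≤ m → ∀ x, x ∈ U n → f^[n] x ∈ U m → x ∈ U (n + m))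
    (x : M) (N : ℕ)
    (hcov : ∀ z : M, ∀ n : ℕ, 1 ≤ n → f^[n] z = x → ∃ m, 1 ≤ m ∧ z ∈ U m)
    (hbound : ∀ y : M, (∃ n, 1 ≤ n ∧ y ∈ U n) →
      (∃ j < chainIndex U y, f^[j] y = x) → chainIndex U y ≤ N) :
    ∀ n : ℕ, 1 ≤ n → ∀ z : M, f^[n] z = x →
      ∃ m, n ≤ m ∧ m ≤ n + N ∧ z ∈ U m := by
  intro n
  induction n using Nat.strong_induction_on with
  | _ n ih =>
    intro hn z hz
    have hne : ∃ m, 1 ≤ m ∧ z ∈ U m := hcov z n hn hz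
    have hmem : chainIndex U z ∈ {m : ℕ | 1 ≤ m ∧ z ∈ U m} := Nat.sInf_mem hne
    obtain ⟨hu1, hzu⟩ := hmem
    rcases lt_trichotomy (chainIndex U z) n with h | h | h
    · have h1 : 1 ≤ n - chainIndex U z := by omega
      have hz' : f^[n - chainIndex U z] (f^[chainIndex U z] z) = x := by
        rw [← Function.iterate_add_apply, Nat.sub_add_cancel h.le]; exact hz
      obtain ⟨m', hm'1, hm'2, hm'3⟩ := ih _ (by omega) h1 _ hz'
      exact ⟨chainIndex U z + m', by omega, by omega,
        hconc _ m' hu1 (le_trans h1 hm'1) z hzu hm'3⟩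
    · exact ⟨n, le_refl n, by omega, h ▸ hzu⟩
    · have hb := hbound z hne ⟨n, h, hz⟩
      exact ⟨chainIndex U z, by omega, by omega, hzu⟩
end

section
/- Let f : M → M be a map with finite fibers (f^{−i}(x) is a finite set for every x and i), and let (U_n)_{n≥1} be a concatenated collection of subsets of M with associated function u and chains C(·). Suppose x ∈ M is contained in infinitely many distinct chains C_j = {y_j, f(y_j), …, f^{s_j−1}(y_j)}, j ≥ 1, with s_j = u(y_j) → ∞, and write x = f^{r_j}(y_j) with 0 ≤ r_j < s_j. Then r_j → ∞ as j → ∞, and consequently x ∈ ⋃_{n≥k} ⋃_{j=0}^{n−1} f^j(u^{−1}(n)) for every k ≥ 1. -/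
open Set Function Filter

/-- If a point `x` is contained in infinitely many chains `C_j` generated by points `y_j`
with lengths `s_j = u(y_j) → ∞`, say `x = f^{r_j}(y_j)` with `r_j < s_j`, then `r_j → ∞`
and consequently `x ∈ ⋃_{n ≥ k} ⋃_{0 ≤ j < n} f^j(u⁻¹(n))` for every `k ≥ 1`. -/
theorem infinitely_many_chains_mem_tail {M : Type*} (f : M → M)
    (hfib : ∀ (x : M) (i : ℕ), (f^[i] ⁻¹' {x}).Finite)
    (U : ℕ → Set M)
    (hconc : ∀ n m, 1 ≤ n → 1 ≤ m → ∀ x, x ∈ U n → f^[n] x ∈ U m → x ∈ U (n + m))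
    (x : M) (y : ℕ → M) (r s : ℕ → ℕ)
    (hyU : ∀ j, ∃ n, 1 ≤ n ∧ y j ∈ U n)
    (hs : ∀ j, s j = chainIndex U (y j))
    (hs_top : Tendsto s atTop atTop)
    (hr : ∀ j, r j < s j)
    (hx : ∀ j, f^[r j] (y j) = x) :
    Tendsto r atTop atTop ∧
      ∀ k : ℕ, 1 ≤ k →
        x ∈ ⋃ n ∈ {n : ℕ | k ≤ n}, ⋃ j ∈ Finset.range n,
          f^[j] '' {z | chainIndex U z = n} := by
  constructor
  · rw [tendsto_atTop]
    intro B
    have hF : (⋃ i ∈ Finset.range (B + 1), f^[i] ⁻¹' {x}).Finite :=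
      Set.Finite.biUnion (Finset.range (B + 1)).finite_toSet (fun i _ => hfib x i)
    obtain ⟨C, hC⟩ := (hF.image (chainIndex U)).bddAbove
    filter_upwards [hs_top.eventually_gt_atTop C] with j hj
    by_contra hBr
    push_neg at hBr
    have hyF : y j ∈ ⋃ i ∈ Finset.range (B + 1), f^[i] ⁻¹' {x} :=
      Set.mem_biUnion (show r j ∈ Finset.range (B + 1) from Finset.mem_range.mpr (by omega)) (by simp [hx j])
    have hle : chainIndex U (y j) ≤ C := hC (Set.mem_image_of_mem _ hyF)
    rw [← hs j] at hle
    omega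
  · intro k hk
    obtain ⟨j, hj⟩ := (hs_top.eventually_ge_atTop k).exists
    refine Set.mem_biUnion (show s j ∈ {n : ℕ | k ≤ n} from hj) ?_
    refine Set.mem_biUnion (show r j ∈ Finset.range (s j) from Finset.mem_range.mpr (hr j)) ?_
    exact ⟨y j, (hs j).symm, hx j⟩
end
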